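/- Let λ ≥ 0 and let f : [−1,1] → ℝ be a broken solution with eigenvalue λ satisfying f(−1) = 1 and f(1) = 0. Then r(λ) > 0 and f(0) = e^{−b} / r(λ). -/

import Mathlib

/-- A "broken solution" with eigenvalue `lam` of the ODE `f'' + 2·b·f' = (log q)²·lam·f`
on `[-1,1]`: `f` is continuous on `[-1,1]`, twice continuously differentiable on
`[-1,0]` and on `[0,1]` (with one-sided derivatives at the endpoints), satisfies the
ODE on `(-1,0) ∪ (0,1)`, and its one-sided derivatives at `0` satisfy
`f'(0-) = B · f'(0+)`. -/
def IsBrokenSolution (q b B lam : ℝ) (f : ℝ → ℝ) : Prop :=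
  ContinuousOn f (Set.Icc (-1) 1) ∧
  ContDiffOn ℝ 2 f (Set.Icc (-1) 0) ∧
  ContDiffOn ℝ 2 f (Set.Icc 0 1) ∧
  (∀ x ∈ Set.Ioo (-1 : ℝ) 0 ∪ Set.Ioo (0 : ℝ) 1,
    deriv (deriv f) x + 2 * b * deriv f x = (Real.log q) ^ 2 * lam * f x) ∧
  derivWithin f (Set.Icc (-1) 0) 0 = B * derivWithin f (Set.Icc 0 1) 0

/-- `s(λ) = b² + (log q)²·λ`. -/
noncomputable def sFun (q b : ℝ) (lam : ℝ) : ℝ := b ^ 2 + (Real.log q) ^ 2 * lam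

/-- `r(λ) = (B+1)·∑ s(λ)ⁿ/(2n)! + (B−1)·b·∑ s(λ)ⁿ/(2n+1)!`. -/
noncomputable def rFun (q b B : ℝ) (lam : ℝ) : ℝ :=
  (B + 1) * ∑' n : ℕ, sFun q b lam ^ n / ((2 * n).factorial : ℝ) +
    (B - 1) * b * ∑' n : ℕ, sFun q b lam ^ n / ((2 * n + 1).factorial : ℝ)


open Set Real

/-- `sinh (ω x) / ω`, extended by `x` at `ω = 0`. -/
noncomputable def Sh (ω x : ℝ) : ℝ := if ω = 0 then x else Real.sinh (ω * x) / ω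

lemma Sh_zero (ω : ℝ) : Sh ω 0 = 0 := by
  unfold Sh; split <;> simp

lemma Sh_neg (ω x : ℝ) : Sh ω (-x) = - Sh ω x := by
  unfold Sh; split
  · ring
  · rw [mul_neg, Real.sinh_neg]; ring

lemma Sh_hasDerivAt (ω x : ℝ) : HasDerivAt (Sh ω) (Real.cosh (ω * x)) x := by
  rcases eq_or_ne ω 0 with h | h
  · have hS : Sh 0 = fun y => y := by funext y; simp [Sh]
    rw [h, hS, zero_mul, Real.cosh_zero]
    exact hasDerivAt_id x
  · have h1 : HasDerivAt (fun y : ℝ => ω * y) ω x := by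
      simpa using (hasDerivAt_id x).const_mul ω
    have h2 : HasDerivAt (fun y : ℝ => Real.sinh (ω * y)) (Real.cosh (ω * x) * ω) x :=
      (Real.hasDerivAt_sinh (ω * x)).comp x h1
    have h3 := h2.div_const ω
    have : Real.cosh (ω * x) * ω / ω = Real.cosh (ω * x) := by field_simp
    rw [this] at h3
    convert h3 using 2 with y
    any_goals rfl
    simp [Sh, h]

lemma cosh_hasDerivAt (ω x : ℝ) :
    HasDerivAt (fun y => Real.cosh (ω * y)) (ω ^ 2 * Sh ω x) x := by
  rcases eq_or_ne ω 0 with h | h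
  · simp only [h, zero_mul, ne_eq, zero_pow, OfNat.ofNat_ne_zero, not_false_iff]
    simpa using hasDerivAt_const x (Real.cosh 0)
  · have h1 : HasDerivAt (fun y : ℝ => ω * y) ω x := by
      simpa using (hasDerivAt_id x).const_mul ω
    have h2 : HasDerivAt (fun y : ℝ => Real.cosh (ω * y)) (Real.sinh (ω * x) * ω) x :=
      (Real.hasDerivAt_cosh (ω * x)).comp x h1
    convert h2 using 1
    simp only [Sh, h, if_false]
    field_simp

lemma cosh_sq_sub (ω x : ℝ) : Real.cosh (ω * x) ^ 2 - ω ^ 2 * Sh ω x ^ 2 = 1 := by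
  rcases eq_or_ne ω 0 with h | h
  · simp [h]
  · simp only [Sh, h, if_false, div_pow]
    have := Real.cosh_sq_sub_sinh_sq (ω * x)
    field_simp
    exact this


/-- The Wronskian of a solution of `g'' = s g` on `[a,c]` against a global solution `h`
is constant on `[a,c]`. -/
lemma wronskian_const {a c : ℝ} (hac : a < c) (s : ℝ) (g g' h h' : ℝ → ℝ)
    (hgc : ∀ x ∈ Icc a c, HasDerivWithinAt g (g' x) (Icc a c) x)
    (hg'c : ContinuousOn g' (Icc a c))
    (hode : ∀ x ∈ Ioo a c, HasDerivAt g' (s * g x) x)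
    (hh : ∀ x, HasDerivAt h (h' x) x)
    (hh' : ∀ x, HasDerivAt h' (s * h x) x) :
    ∀ x ∈ Icc a c, ∀ y ∈ Icc a c,
      g x * h' x - g' x * h x = g y * h' y - g' y * h y := by
  set W : ℝ → ℝ := fun x => g x * h' x - g' x * h x with hW
  have hgcont : ContinuousOn g (Icc a c) := fun x hx => (hgc x hx).continuousWithinAt
  have hhcont : Continuous h := by
    rw [continuous_iff_continuousAt]; exact fun x => (hh x).continuousAt
  have hh'cont : Continuous h' := by
    rw [continuous_iff_continuousAt]; exact fun x => (hh' x).continuousAt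
  have hWcont : ContinuousOn W (Icc a c) :=
    (hgcont.mul hh'cont.continuousOn).sub (hg'c.mul hhcont.continuousOn)
  have hW0 : ∀ t ∈ Ioo a c, HasDerivAt W 0 t := by
    intro t ht
    have hmem : Icc a c ∈ nhds t := Icc_mem_nhds ht.1 ht.2
    have hgt : HasDerivAt g (g' t) t := (hgc t (Ioo_subset_Icc_self ht)).hasDerivAt hmem
    have h1 : HasDerivAt (fun x => g x * h' x)
        (g' t * h' t + g t * (s * h t)) t := hgt.mul (hh' t)
    have h2 : HasDerivAt (fun x => g' x * h x)
        (s * g t * h t + g' t * h' t) t := (hode t ht).mul (hh t)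
    have h3 := h1.sub h2
    convert h3 using 1
    any_goals rfl
    ring
  -- W is constant on any closed subinterval of Ioo
  have key : ∀ x ∈ Ioo a c, ∀ y ∈ Ioo a c, x ≤ y → W y = W x := by
    intro x hx y hy hxy
    have hsub : Icc x y ⊆ Icc a c := Icc_subset_Icc hx.1.le hy.2.le
    have := constant_of_has_deriv_right_zero (f := W) (a := x) (b := y)
      (hWcont.mono hsub) (fun t ht => by
        have htIoo : t ∈ Ioo a c := ⟨lt_of_lt_of_le hx.1 ht.1, lt_of_lt_of_le ht.2 hy.2.le⟩
        exact (hW0 t htIoo).hasDerivWithinAt)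
    exact this y (right_mem_Icc.2 hxy)
  set m : ℝ := (a + c) / 2 with hm
  have hmIoo : m ∈ Ioo a c := ⟨by simp [hm]; linarith, by simp [hm]; linarith⟩
  have hIoo : EqOn W (fun _ => W m) (Ioo a c) := by
    intro x hx
    rcases le_total x m with h | h
    · exact (key x hx m hmIoo h).symm
    · exact key m hmIoo x hx h
  have hIcc : EqOn W (fun _ => W m) (Icc a c) := by
    have hcl : Icc a c ⊆ closure (Ioo a c) := by
      rw [closure_Ioo hac.ne]
    exact hIoo.of_subset_closure hWcont continuousOn_const Ioo_subset_Icc_self hcl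
  intro x hx y hy
  show W x = W y
  rw [hIcc hx, hIcc hy]

/-- Representation of solutions of `g'' = s g` on `[a,c] ∋ 0` in terms of data at `0`. -/
lemma ode_rep {a c : ℝ} (hac : a < c) (h0 : (0:ℝ) ∈ Icc a c) (s : ℝ) (hs : 0 ≤ s)
    (g g' : ℝ → ℝ)
    (hgc : ∀ x ∈ Icc a c, HasDerivWithinAt g (g' x) (Icc a c) x)
    (hg'c : ContinuousOn g' (Icc a c))
    (hode : ∀ x ∈ Ioo a c, HasDerivAt g' (s * g x) x) :
    ∀ x ∈ Icc a c,
      g x = g 0 * Real.cosh (Real.sqrt s * x) + g' 0 * Sh (Real.sqrt s) x := by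
  set ω := Real.sqrt s with hω
  have hω2 : ω ^ 2 = s := Real.sq_sqrt hs
  have hW2 := wronskian_const hac s g g' (Sh ω) (fun x => Real.cosh (ω * x))
    hgc hg'c hode (Sh_hasDerivAt ω)
    (fun x => by
      have := cosh_hasDerivAt ω x
      rwa [hω2] at this)
  have hW1 := wronskian_const hac s g g' (fun x => Real.cosh (ω * x))
    (fun x => s * Sh ω x) hgc hg'c hode
    (fun x => by
      have := cosh_hasDerivAt ω x
      rwa [hω2] at this)
    (fun x => (Sh_hasDerivAt ω x).const_mul s)
  intro x hx
  have e2 := hW2 x hx 0 h0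
  have e1 := hW1 x hx 0 h0
  simp only [Sh_zero, Real.cosh_zero, mul_zero, mul_one, sub_zero, zero_sub] at e2 e1
  have hid : Real.cosh (ω * x) ^ 2 - s * Sh ω x ^ 2 = 1 := by
    rw [← hω2]; exact cosh_sq_sub ω x
  have : g x * (Real.cosh (ω * x) ^ 2 - s * Sh ω x ^ 2)
      = Real.cosh (ω * x) * (g x * Real.cosh (ω * x) - g' x * Sh ω x)
        - Sh ω x * (g x * (s * Sh ω x) - g' x * Real.cosh (ω * x)) := by ring
  rw [hid, mul_one, e2, e1] at this
  rw [this]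
  ring

/-- On an interval `[a,c] ∋ 0`, a solution of `f'' + 2 b f' = μ f` obeys an explicit formula. -/
lemma side_eq {a c : ℝ} (b μ : ℝ) (hac : a < c) (h0 : (0:ℝ) ∈ Icc a c) (f : ℝ → ℝ)
    (hf : ContDiffOn ℝ 2 f (Icc a c))
    (hode : ∀ x ∈ Ioo a c, deriv (deriv f) x + 2 * b * deriv f x = μ * f x)
    (hs : 0 ≤ b ^ 2 + μ) (x : ℝ) (hx : x ∈ Icc a c) :
    Real.exp (b * x) * f x
      = f 0 * Real.cosh (Real.sqrt (b ^ 2 + μ) * x)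
        + (b * f 0 + derivWithin f (Icc a c) 0) * Sh (Real.sqrt (b ^ 2 + μ)) x := by
  set s : ℝ := b ^ 2 + μ with hsdef
  set fd : ℝ → ℝ := derivWithin f (Icc a c) with hfd
  set g : ℝ → ℝ := fun y => Real.exp (b * y) * f y with hg
  set g' : ℝ → ℝ := fun y => Real.exp (b * y) * (b * f y + fd y) with hg'
  have hexp : ∀ y : ℝ, HasDerivAt (fun z : ℝ => Real.exp (b * z)) (Real.exp (b * y) * b) y := by
    intro y
    have h1 : HasDerivAt (fun z : ℝ => b * z) b y := by
      simpa using (hasDerivAt_id y).const_mul b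
    exact (Real.hasDerivAt_exp (b * y)).comp y h1
  have hfdiff : DifferentiableOn ℝ f (Icc a c) := hf.differentiableOn two_ne_zero
  have hgc : ∀ y ∈ Icc a c, HasDerivWithinAt g (g' y) (Icc a c) y := by
    intro y hy
    have h1 : HasDerivWithinAt f (fd y) (Icc a c) y := (hfdiff y hy).hasDerivWithinAt
    have h2 := ((hexp y).hasDerivWithinAt).mul h1
    convert h2 using 1
    any_goals rfl
    simp only [hg']
    ring
  have hg'c : ContinuousOn g' (Icc a c) := by
    apply ContinuousOn.mul
    · exact (Real.continuous_exp.comp (continuous_const.mul continuous_id)).continuousOn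
    · exact (continuousOn_const.mul hf.continuousOn).add
        (hf.continuousOn_derivWithin (uniqueDiffOn_Icc hac) one_le_two)
  have hodeg : ∀ y ∈ Ioo a c, HasDerivAt g' (s * g y) y := by
    intro y hy
    have hUmem : Ioo a c ∈ nhds y := isOpen_Ioo.mem_nhds hy
    have hfU : ContDiffOn ℝ 2 f (Ioo a c) := hf.mono Ioo_subset_Icc_self
    have hf1 : HasDerivAt f (deriv f y) y :=
      ((hfU.differentiableOn two_ne_zero).differentiableAt hUmem).hasDerivAt
    have hd1 : ContDiffOn ℝ 1 (deriv f) (Ioo a c) := by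
      have : (1 : WithTop ℕ∞) + 1 ≤ 2 := by norm_num
      exact hfU.deriv_of_isOpen isOpen_Ioo this
    have hf2 : HasDerivAt (deriv f) (deriv (deriv f) y) y :=
      ((hd1.differentiableOn one_ne_zero).differentiableAt hUmem).hasDerivAt
    -- the unrestricted version of g'
    set G : ℝ → ℝ := fun z => Real.exp (b * z) * (b * f z + deriv f z) with hG
    have hGder : HasDerivAt G
        (Real.exp (b * y) * b * (b * f y + deriv f y)
          + Real.exp (b * y) * (b * deriv f y + deriv (deriv f) y)) y :=
      (hexp y).mul ((hf1.const_mul b).add hf2)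
    have heq : g' =ᶠ[nhds y] G := by
      filter_upwards [hUmem] with z hz
      have : fd z = deriv f z := derivWithin_of_mem_nhds (Icc_mem_nhds hz.1 hz.2)
      simp only [hg', hG, this]
    have hval : Real.exp (b * y) * b * (b * f y + deriv f y)
          + Real.exp (b * y) * (b * deriv f y + deriv (deriv f) y) = s * g y := by
      have h := hode y hy
      simp only [hg, hsdef]
      nlinarith [h, Real.exp_pos (b * y)]
    rw [hval] at hGder
    exact hGder.congr_of_eventuallyEq heq
  have := ode_rep hac h0 s hs g g' hgc hg'c hodeg x hx
  simpa [hg, hg', mul_zero, Real.exp_zero] using this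

lemma tsum_even (ω : ℝ) :
    (∑' n : ℕ, (ω ^ 2) ^ n / ((2 * n).factorial : ℝ)) = Real.cosh ω := by
  rw [Real.cosh_eq_tsum]
  congr 1; funext n; rw [pow_mul]

lemma tsum_odd (ω : ℝ) :
    (∑' n : ℕ, (ω ^ 2) ^ n / ((2 * n + 1).factorial : ℝ)) = Sh ω 1 := by
  rcases eq_or_ne ω 0 with h | h
  · subst h
    rw [tsum_eq_single 0 (fun n hn => by simp [zero_pow hn])]
    simp [Sh]
  · have hsinh : Real.sinh ω = ω * ∑' n : ℕ, (ω ^ 2) ^ n / ((2 * n + 1).factorial : ℝ) := by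
      rw [Real.sinh_eq_tsum, ← tsum_mul_left]
      congr 1; funext n
      rw [pow_succ, pow_mul]
      ring
    have hSh : Sh ω 1 = Real.sinh ω / ω := by simp [Sh, h]
    rw [hSh, hsinh]
    field_simp

theorem brokenSolution_value_at_zero_down
    (q b B : ℝ) (hq : 1 < q) (hB : 0 < B) (lam : ℝ) (hlam : 0 ≤ lam) (f : ℝ → ℝ)
    (hf : IsBrokenSolution q b B lam f) (hf1 : f (-1) = 1) (hf2 : f 1 = 0) :
    0 < rFun q b B lam ∧ f 0 = Real.exp (-b) / rFun q b B lam := by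
  obtain ⟨hcont, hfL, hfR, hode, hjump⟩ := hf
  set μ : ℝ := (Real.log q) ^ 2 * lam with hμ
  have hμ0 : 0 ≤ μ := mul_nonneg (sq_nonneg _) hlam
  have hs : 0 ≤ b ^ 2 + μ := by positivity
  have hω0 : 0 ≤ Real.sqrt (b ^ 2 + μ) := Real.sqrt_nonneg _
  have hω2 : Real.sqrt (b ^ 2 + μ) ^ 2 = b ^ 2 + μ := Real.sq_sqrt hs
  set ω : ℝ := Real.sqrt (b ^ 2 + μ) with hωdef
  -- right interval at x = 1
  have eqR := side_eq b μ (by norm_num : (0:ℝ) < 1)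
    (by norm_num : (0:ℝ) ∈ Icc (0:ℝ) 1) f hfR
    (fun x hx => hode x (Or.inr hx)) hs 1 (by norm_num : (1:ℝ) ∈ Icc (0:ℝ) 1)
  rw [hf2, mul_zero, mul_one] at eqR
  -- left interval at x = -1
  have eqL := side_eq b μ (by norm_num : (-1:ℝ) < 0)
    (by norm_num : (0:ℝ) ∈ Icc (-1:ℝ) 0) f hfL
    (fun x hx => hode x (Or.inl hx)) hs (-1) (by norm_num : (-1:ℝ) ∈ Icc (-1:ℝ) 0)
  rw [hf1, mul_one, show b * (-1) = -b by ring,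
    show ω * (-1) = -(ω * 1) by ring, Real.cosh_neg, Sh_neg, hjump] at eqL
  rw [mul_one] at eqL
  -- identify the tsums
  have hsf : sFun q b lam = ω ^ 2 := by rw [hω2, hμ]; rfl
  have hrg : rFun q b B lam = (B + 1) * Real.cosh ω + (B - 1) * b * Sh ω 1 := by
    unfold rFun
    rw [hsf, tsum_even, tsum_odd]
  -- positivity facts
  have hsc : Real.sinh ω < Real.cosh ω := by
    have h := Real.exp_pos (-ω)
    have : Real.cosh ω - Real.sinh ω = Real.exp (-ω) := by
      rw [Real.cosh_eq, Real.sinh_eq]; ring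
    linarith
  have hc1 : 1 ≤ Real.cosh ω := Real.one_le_cosh ω
  have hsinh0 : 0 ≤ Real.sinh ω := Real.sinh_nonneg_iff.mpr hω0
  have hs1 : 0 ≤ Sh ω 1 := by
    unfold Sh; split
    · norm_num
    · rename_i h
      have hωpos : 0 < ω := lt_of_le_of_ne hω0 (Ne.symm h)
      have : 0 ≤ Real.sinh (ω * 1) := by rw [mul_one]; exact hsinh0
      positivity
  have hωs1 : ω * Sh ω 1 = Real.sinh ω := by
    unfold Sh; split
    · rename_i h; simp [h]
    · rw [mul_one]; field_simp
  have hab : |b| ≤ ω := by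
    rw [hωdef, ← Real.sqrt_sq_eq_abs]
    exact Real.sqrt_le_sqrt (by linarith)
  have h1 : |(B - 1) * b| ≤ (B + 1) * ω := by
    rw [abs_mul]
    exact mul_le_mul (abs_le.mpr ⟨by linarith, by linarith⟩) hab (abs_nonneg b) (by linarith)
  have h2 : -((B + 1) * ω) ≤ (B - 1) * b := by
    have := neg_abs_le ((B - 1) * b); linarith
  have h3 : -((B + 1) * ω) * Sh ω 1 ≤ (B - 1) * b * Sh ω 1 :=
    mul_le_mul_of_nonneg_right h2 hs1
  have hrpos : 0 < rFun q b B lam := by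
    rw [hrg]
    nlinarith [h3, hωs1, hsc, hc1, hB]
  refine ⟨hrpos, ?_⟩
  have key : Real.exp (-b) = f 0 * rFun q b B lam := by
    rw [hrg]
    linear_combination eqL + B * eqR
  rw [eq_div_iff hrpos.ne']
  linarith [key]
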